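/- Let n, k, N ≥ 1 and let v = (v_0,…,v_{n−1}) ∈ ℤ^n. Then DET of the 2k-th order hypermatrix with entries Λ^{i_1+⋯+i_{2k}+v_{i_1}}(Y) (indices 0 ≤ i_1,…,i_{2k} ≤ n−1) equals (−1)^{kn(n−1)/2} times DET of the hypermatrix with entries Λ^{i_1+⋯+i_k−(i_{k+1}+⋯+i_{2k})+v_{i_1}+k(n−1)}(Y); equivalently, DET of the Toeplitz-type hypermatrix with entries Λ^{i_1+⋯+i_k−(i_{k+1}+⋯+i_{2k})+v_{i_1}}(Y) equals (−1)^{kn(n−1)/2} times DET of the Hankel-type hypermatrix with entries Λ^{i_1+⋯+i_{2k}+v_{i_1}+k(1−n)}(Y). In terms of the paper's notation: H^k_v(Y) = (−1)^{kn(n−1)/2} T^k_{v+((k(n−1))^n)}(Y) and T^k_v(Y) = (−1)^{kn(n−1)/2} H^k_{v+((k(1−n))^n)}(Y). -/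

import Mathlib

/-- The scaled hyperdeterminant `DET` of a `k`-th order hypermatrix. -/
noncomputable def DET {R : Type*} [CommRing R] (n k : ℕ)
    (M : (Fin k → Fin n) → R) : R :=
  ∑ σ : Fin k → Equiv.Perm (Fin n),
    (∏ s, (Equiv.Perm.sign (σ s) : ℤ)) • ∏ i, M (fun s => σ s i)

/-- `Λ N p` is the `p`-th elementary symmetric polynomial in `N` variables,
with the convention that it vanishes for `p < 0` (and for `p > N`),
and equals `1` for `p = 0`. -/
noncomputable def Λ (N : ℕ) (p : ℤ) : MvPolynomial (Fin N) ℤ :=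
  if 0 ≤ p then MvPolynomial.esymm (Fin N) ℤ p.toNat else 0

/-- The sign pattern of Toeplitz hyperdeterminants: the first `k` indices enter
positively and the last `k` negatively. -/
def toepSign (k : ℕ) (s : Fin (2 * k)) : ℤ := if (s : ℕ) < k then 1 else -1

/-- The sign of the order-reversing permutation of `Fin n`. -/
lemma sign_revPerm_eq : ∀ n : ℕ,
    Equiv.Perm.sign (Fin.revPerm : Equiv.Perm (Fin n)) = (-1 : ℤˣ) ^ (n * (n - 1) / 2)
  | 0 => by
    rw [Subsingleton.elim (Fin.revPerm : Equiv.Perm (Fin 0)) 1]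
    simp
  | (n + 1) => by
    have h : finRotate (n + 1) * (Fin.revPerm : Equiv.Perm (Fin (n + 1)))
        = Equiv.Perm.decomposeFin.symm (0, (Fin.revPerm : Equiv.Perm (Fin n))) := by
      ext x
      induction x using Fin.cases with
      | zero =>
        simp [Equiv.Perm.mul_apply, Fin.rev_zero, Fin.last_add_one]
      | succ y =>
        simp [Equiv.Perm.mul_apply, Fin.rev_succ, Fin.coeSucc_eq_succ]
    have hs := congrArg Equiv.Perm.sign h
    rw [map_mul, Equiv.Perm.decomposeFin.symm_sign, sign_finRotate, sign_revPerm_eq n,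
      if_pos rfl, one_mul] at hs
    have he : (n + 1) * ((n + 1) - 1) / 2 = n + n * (n - 1) / 2 := by
      have h2 : (n + 1) * n = n * (n - 1) + 2 * n := by
        cases n with
        | zero => rfl
        | succ m => simp only [Nat.add_sub_cancel]; ring
      simp only [Nat.add_sub_cancel, h2]
      omega
    have hinv : ((-1 : ℤˣ) ^ n) * ((-1 : ℤˣ) ^ n) = 1 := by
      rw [← mul_pow]; norm_num
    calc Equiv.Perm.sign (Fin.revPerm : Equiv.Perm (Fin (n + 1)))
        = ((-1 : ℤˣ) ^ n * (-1 : ℤˣ) ^ n) *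
            Equiv.Perm.sign (Fin.revPerm : Equiv.Perm (Fin (n + 1))) := by
          rw [hinv, one_mul]
      _ = (-1 : ℤˣ) ^ n * ((-1 : ℤˣ) ^ n *
            Equiv.Perm.sign (Fin.revPerm : Equiv.Perm (Fin (n + 1)))) := by
          rw [mul_assoc]
      _ = (-1 : ℤˣ) ^ n * (-1 : ℤˣ) ^ (n * (n - 1) / 2) := by rw [Nat.add_sub_cancel] at hs; rw [hs]
      _ = (-1 : ℤˣ) ^ ((n + 1) * ((n + 1) - 1) / 2) := by rw [he, pow_add]

/-- Reindexing a hyperdeterminant by composing each slot with a fixed permutation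
multiplies it by the product of the signs. -/
lemma DET_reindex {R : Type*} [CommRing R] (n m : ℕ) (M M' : (Fin m → Fin n) → R)
    (τ : Fin m → Equiv.Perm (Fin n)) (hM : ∀ i, M' i = M (fun s => τ s (i s))) :
    DET n m M' = (∏ s, (Equiv.Perm.sign (τ s) : ℤ)) • DET n m M := by
  have hsq : (∏ s, (Equiv.Perm.sign (τ s) : ℤ)) * (∏ s, (Equiv.Perm.sign (τ s) : ℤ)) = 1 := by
    rw [← Finset.prod_mul_distrib]
    refine Finset.prod_eq_one fun s _ => ?_
    rw [← Units.val_mul, Int.units_mul_self, Units.val_one]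
  unfold DET
  rw [Finset.smul_sum]
  refine Fintype.sum_equiv (Equiv.piCongrRight fun s => Equiv.mulLeft (τ s)) _ _ fun σ => ?_
  have hprod : ∏ i, M' (fun s => σ s i)
      = ∏ i, M (fun s => ((Equiv.piCongrRight fun s => Equiv.mulLeft (τ s)) σ s) i) := by
    refine Finset.prod_congr rfl fun i _ => ?_
    rw [hM]
    rfl
  have hsgn : (∏ s, (Equiv.Perm.sign
        (((Equiv.piCongrRight fun s => Equiv.mulLeft (τ s)) σ) s) : ℤ))
      = (∏ s, (Equiv.Perm.sign (τ s) : ℤ)) * ∏ s, (Equiv.Perm.sign (σ s) : ℤ) := by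
    rw [← Finset.prod_mul_distrib]
    refine Finset.prod_congr rfl fun s _ => ?_
    show ((Equiv.Perm.sign (τ s * σ s) : ℤˣ) : ℤ) = _
    rw [map_mul, Units.val_mul]
  rw [hprod, hsgn, smul_smul, ← mul_assoc, hsq, one_mul]

lemma prod_ite_half (k : ℕ) (c : ℤ) :
    (∏ s : Fin (2 * k), if (s : ℕ) < k then (1 : ℤ) else c) = c ^ k := by
  rw [Fin.prod_univ_eq_prod_range (fun j => if j < k then (1 : ℤ) else c) (2 * k), two_mul,
    Finset.prod_range_add]
  have h1 : (∏ x ∈ Finset.range k, if x < k then (1 : ℤ) else c) = 1 :=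
    Finset.prod_eq_one fun x hx => if_pos (Finset.mem_range.mp hx)
  have h2 : (∏ x ∈ Finset.range k, if k + x < k then (1 : ℤ) else c) = c ^ k := by
    rw [Finset.prod_congr rfl fun x _ => if_neg (by omega)]
    simp
  rw [h1, h2, one_mul]

lemma sum_ite_half (k : ℕ) (c : ℤ) :
    (∑ s : Fin (2 * k), if (s : ℕ) < k then (0 : ℤ) else c) = k * c := by
  rw [Fin.sum_univ_eq_sum_range (fun j => if j < k then (0 : ℤ) else c) (2 * k), two_mul,
    Finset.sum_range_add]
  have h1 : (∑ x ∈ Finset.range k, if x < k then (0 : ℤ) else c) = 0 :=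
    Finset.sum_eq_zero fun x hx => if_pos (Finset.mem_range.mp hx)
  have h2 : (∑ x ∈ Finset.range k, if k + x < k then (0 : ℤ) else c) = k * c := by
    rw [Finset.sum_congr rfl fun x _ => if_neg (by omega)]
    simp [mul_comm]
  rw [h1, h2, zero_add]

lemma key_relation (n k N : ℕ) (hk' : 1 ≤ k) (hk : 0 < 2 * k) (w : Fin n → ℤ) :
    DET n (2 * k) (fun i => Λ N ((∑ s, ((i s : ℕ) : ℤ)) + w (i ⟨0, hk⟩)))
      = (-1 : ℤ) ^ (k * (n * (n - 1) / 2)) •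
        DET n (2 * k) (fun i =>
          Λ N ((∑ s, toepSign k s * ((i s : ℕ) : ℤ)) + (w (i ⟨0, hk⟩)
            + (k : ℤ) * ((n : ℤ) - 1)))) := by
  set τ : Fin (2 * k) → Equiv.Perm (Fin n) :=
    fun s => if (s : ℕ) < k then 1 else Fin.revPerm with hτ
  have hM : ∀ i : Fin (2 * k) → Fin n,
      Λ N ((∑ s, ((i s : ℕ) : ℤ)) + w (i ⟨0, hk⟩))
        = Λ N ((∑ s, toepSign k s * ((τ s (i s) : ℕ) : ℤ)) + (w (τ ⟨0, hk⟩ (i ⟨0, hk⟩))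
            + (k : ℤ) * ((n : ℤ) - 1))) := by
    intro i
    have h0 : τ ⟨0, hk⟩ (i ⟨0, hk⟩) = i ⟨0, hk⟩ := by
      have hc : ((⟨0, hk⟩ : Fin (2 * k)) : ℕ) < k := hk'
      simp only [hτ, if_pos hc, Equiv.Perm.one_apply]
    have hterm : ∀ s : Fin (2 * k), toepSign k s * ((τ s (i s) : ℕ) : ℤ)
        = ((i s : ℕ) : ℤ) - (if (s : ℕ) < k then 0 else ((n : ℤ) - 1)) := by
      intro s
      by_cases hs : (s : ℕ) < k
      · simp [toepSign, hτ, hs]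
      · have hlt : ((i s : ℕ)) < n := (i s).isLt
        have hrev : ((Fin.revPerm (i s) : Fin n) : ℤ) = (n : ℤ) - 1 - ((i s : ℕ) : ℤ) := by
          rw [Fin.revPerm_apply, Fin.val_rev]
          push_cast
          omega
        simp only [toepSign, hτ, if_neg hs, hrev]
        ring
    have hsum : (∑ s, toepSign k s * ((τ s (i s) : ℕ) : ℤ))
        = (∑ s, ((i s : ℕ) : ℤ)) - (k : ℤ) * ((n : ℤ) - 1) := by
      rw [Finset.sum_congr rfl fun s _ => hterm s, Finset.sum_sub_distrib, sum_ite_half]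
    rw [h0, hsum]
    congr 1
    ring
  have h := DET_reindex n (2 * k)
    (fun i => Λ N ((∑ s, toepSign k s * ((i s : ℕ) : ℤ)) + (w (i ⟨0, hk⟩)
      + (k : ℤ) * ((n : ℤ) - 1))))
    (fun i => Λ N ((∑ s, ((i s : ℕ) : ℤ)) + w (i ⟨0, hk⟩))) τ hM
  have hsign : (∏ s, (Equiv.Perm.sign (τ s) : ℤ)) = (-1 : ℤ) ^ (k * (n * (n - 1) / 2)) := by
    have hterm : ∀ s : Fin (2 * k), (Equiv.Perm.sign (τ s) : ℤ)
        = if (s : ℕ) < k then (1 : ℤ) else (-1 : ℤ) ^ (n * (n - 1) / 2) := by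
      intro s
      by_cases hs : (s : ℕ) < k
      · simp [hτ, hs]
      · rw [hτ]
        simp only [if_neg hs, sign_revPerm_eq]
        push_cast
        rfl
    rw [Finset.prod_congr rfl fun s _ => hterm s, prod_ite_half, ← pow_mul,
      Nat.mul_comm]
  rw [hsign] at h
  exact h

/-- Relation between shifted Hankel and Toeplitz hyperdeterminants:
`H^k_v(Y) = (−1)^{kn(n−1)/2} T^k_{v+((k(n−1))^n)}(Y)` and
`T^k_v(Y) = (−1)^{kn(n−1)/2} H^k_{v+((k(1−n))^n)}(Y)`
(stated for the `n!`-scaled hyperdeterminants `DET`). -/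
theorem hankel_toeplitz_relation (n k N : ℕ) (hn : 1 ≤ n) (hk : 1 ≤ k)
    (hN : 1 ≤ N) (v : Fin n → ℤ) :
    (DET n (2 * k) (fun i => Λ N ((∑ s, ((i s : ℕ) : ℤ)) + v (i ⟨0, by omega⟩)))
        = (-1 : ℤ) ^ (k * (n * (n - 1) / 2)) •
          DET n (2 * k) (fun i =>
            Λ N ((∑ s, toepSign k s * ((i s : ℕ) : ℤ)) + (v (i ⟨0, by omega⟩)
              + (k : ℤ) * ((n : ℤ) - 1)))))
      ∧ (DET n (2 * k) (fun i =>
            Λ N ((∑ s, toepSign k s * ((i s : ℕ) : ℤ)) + v (i ⟨0, by omega⟩)))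
          = (-1 : ℤ) ^ (k * (n * (n - 1) / 2)) •
            DET n (2 * k) (fun i =>
              Λ N ((∑ s, ((i s : ℕ) : ℤ)) + (v (i ⟨0, by omega⟩)
                + (k : ℤ) * (1 - (n : ℤ)))))) := by
  have hk2 : 0 < 2 * k := by omega
  constructor
  · exact key_relation n k N hk hk2 v
  · have h2 := key_relation n k N hk hk2 (fun j => v j + (k : ℤ) * (1 - (n : ℤ)))
    have e1 : (fun (i : Fin (2 * k) → Fin n) =>
          Λ N ((∑ s, toepSign k s * ((i s : ℕ) : ℤ)) +
            ((fun j => v j + (k : ℤ) * (1 - (n : ℤ))) (i ⟨0, hk2⟩)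
              + (k : ℤ) * ((n : ℤ) - 1))))
        = fun i => Λ N ((∑ s, toepSign k s * ((i s : ℕ) : ℤ)) + v (i ⟨0, hk2⟩)) := by
      funext i
      congr 1
      ring
    rw [e1] at h2
    have hε : ((-1 : ℤ) ^ (k * (n * (n - 1) / 2))) * ((-1 : ℤ) ^ (k * (n * (n - 1) / 2)))
        = 1 := by
      rw [← mul_pow]; norm_num
    have h3 : ((-1 : ℤ) ^ (k * (n * (n - 1) / 2))) •
        DET n (2 * k) (fun i => Λ N ((∑ s, ((i s : ℕ) : ℤ)) +
          (fun j => v j + (k : ℤ) * (1 - (n : ℤ))) (i ⟨0, hk2⟩)))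
        = DET n (2 * k) (fun i =>
            Λ N ((∑ s, toepSign k s * ((i s : ℕ) : ℤ)) + v (i ⟨0, hk2⟩))) := by
      rw [h2, smul_smul, hε, one_smul]
    exact h3.symm
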